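/- Ramanujan's differential equation for the weight-2 Eisenstein series holds as an identity of formal power series: q·(d/dq) G₂(q) = −2·G₂(q)² + (5/6)·G₄(q), where G₂(q) = −1/24 + Σ_{n≥1} σ₁(n) qⁿ and G₄(q) = 1/240 + Σ_{n≥1} σ₃(n) qⁿ. -/

import Mathlib

open PowerSeries Finset


/-- Quadruples (a,x,b,y) of positive naturals with a*x + b*y = n. -/
def Q (n : ℕ) : Finset (ℕ × ℕ × ℕ × ℕ) :=
  (range (n+1) ×ˢ range (n+1) ×ˢ range (n+1) ×ˢ range (n+1)).filter
    (fun p => p.1 * p.2.1 + p.2.2.1 * p.2.2.2 = n ∧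
      0 < p.1 ∧ 0 < p.2.1 ∧ 0 < p.2.2.1 ∧ 0 < p.2.2.2)

lemma mem_Q {n : ℕ} {p : ℕ × ℕ × ℕ × ℕ} :
    p ∈ Q n ↔ p.1 * p.2.1 + p.2.2.1 * p.2.2.2 = n ∧
      0 < p.1 ∧ 0 < p.2.1 ∧ 0 < p.2.2.1 ∧ 0 < p.2.2.2 := by
  obtain ⟨a, x, b, y⟩ := p
  simp only [Q, mem_filter, mem_product, mem_range]
  constructor
  · rintro ⟨-, h⟩; exact h
  · rintro ⟨h, ha, hx, hb, hy⟩
    have h1 : a ≤ a * x := Nat.le_mul_of_pos_right a hx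
    have h2 : x ≤ a * x := Nat.le_mul_of_pos_left x ha
    have h3 : b ≤ b * y := Nat.le_mul_of_pos_right b hy
    have h4 : y ≤ b * y := Nat.le_mul_of_pos_left y hb
    exact ⟨⟨by omega, by omega, by omega, by omega⟩, h, ha, hx, hb, hy⟩

/-- swap symmetry (a,x,b,y) ↦ (b,y,a,x). -/
lemma Qswap (n : ℕ) (f : ℕ → ℕ → ℕ → ℕ → ℚ) (P Pc : ℕ × ℕ × ℕ × ℕ → Prop)
    [DecidablePred P] [DecidablePred Pc]
    (hP : ∀ a x b y, P (a,x,b,y) ↔ Pc (b,y,a,x)) :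
    ∑ p ∈ (Q n).filter P, f p.1 p.2.1 p.2.2.1 p.2.2.2
      = ∑ p ∈ (Q n).filter Pc, f p.2.2.1 p.2.2.2 p.1 p.2.1 := by
  refine Finset.sum_nbij' (fun p => (p.2.2.1, p.2.2.2, p.1, p.2.1))
    (fun p => (p.2.2.1, p.2.2.2, p.1, p.2.1)) ?_ ?_ ?_ ?_ ?_
  · rintro ⟨a, x, b, y⟩ hp
    simp only [mem_filter, mem_Q] at hp ⊢
    obtain ⟨⟨he, h⟩, hp⟩ := hp
    exact ⟨⟨by omega, h.2.2.1, h.2.2.2, h.1, h.2.1⟩, (hP a x b y).1 hp⟩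
  · rintro ⟨a, x, b, y⟩ hp
    simp only [mem_filter, mem_Q] at hp ⊢
    obtain ⟨⟨he, h⟩, hp⟩ := hp
    exact ⟨⟨by omega, h.2.2.1, h.2.2.2, h.1, h.2.1⟩, (hP b y a x).2 hp⟩
  · rintro ⟨a, x, b, y⟩ _; rfl
  · rintro ⟨a, x, b, y⟩ _; rfl
  · rintro ⟨a, x, b, y⟩ _; rfl
lemma Qkey (n : ℕ) (H : ℕ → ℕ → ℚ) :
    ∑ p ∈ (Q n).filter (fun p => p.2.2.2 < p.2.1), H p.1 p.2.2.1
      = ∑ p ∈ (Q n).filter (fun p => p.2.2.1 < p.1), H p.2.2.1 (p.1 - p.2.2.1) := by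
  refine Finset.sum_nbij' (fun p => (p.1 + p.2.2.1, p.2.2.2, p.1, p.2.1 - p.2.2.2))
    (fun q => (q.2.2.1, q.2.1 + q.2.2.2, q.1 - q.2.2.1, q.2.1)) ?_ ?_ ?_ ?_ ?_
  · rintro ⟨a, x, b, y⟩ hp
    simp only [mem_filter, mem_Q] at hp ⊢
    obtain ⟨⟨he, ha, hx, hb, hy⟩, hyx⟩ := hp
    have hsum : (a + b) * y + a * (x - y) = n := by
      have h1 : y + (x - y) = x := by omega
      calc (a + b) * y + a * (x - y) = b * y + a * (y + (x - y)) := by ring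
        _ = b * y + a * x := by rw [h1]
        _ = n := by omega
    exact ⟨⟨hsum, by omega, hy, ha, by omega⟩, by omega⟩
  · rintro ⟨A, X, B, Y⟩ hq
    simp only [mem_filter, mem_Q] at hq ⊢
    obtain ⟨⟨he, hA, hX, hB, hY⟩, hBA⟩ := hq
    have hsum : B * (X + Y) + (A - B) * X = n := by
      have h1 : B + (A - B) = A := by omega
      calc B * (X + Y) + (A - B) * X = B * Y + (B + (A - B)) * X := by ring
        _ = B * Y + A * X := by rw [h1]
        _ = n := by omega
    exact ⟨⟨hsum, hB, by omega, by omega, hX⟩, by omega⟩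
  · rintro ⟨a, x, b, y⟩ hp
    simp only [mem_filter, mem_Q] at hp
    obtain ⟨⟨he, ha, hx, hb, hy⟩, hyx⟩ := hp
    simp only [Prod.mk.injEq, and_true, true_and]
    omega
  · rintro ⟨A, X, B, Y⟩ hq
    simp only [mem_filter, mem_Q] at hq
    obtain ⟨⟨he, hA, hX, hB, hY⟩, hBA⟩ := hq
    simp only [Prod.mk.injEq, and_true, true_and]
    omega
  · rintro ⟨a, x, b, y⟩ _
    simp only [Nat.add_sub_cancel_left]
lemma Qdiag_xy (n : ℕ) (H : ℕ → ℕ → ℚ) :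
    ∑ p ∈ (Q n).filter (fun p => p.2.1 = p.2.2.2), H p.1 p.2.2.1
      = ∑ d ∈ n.divisors, ∑ a ∈ Ico 1 d, H a (d - a) := by
  rw [← Finset.sum_sigma (n.divisors) (fun d => Ico 1 d) (fun q => H q.2 (q.1 - q.2))]
  refine Finset.sum_nbij' (fun p => ⟨p.1 + p.2.2.1, p.1⟩)
    (fun q => (q.2, n / q.1, q.1 - q.2, n / q.1)) ?_ ?_ ?_ ?_ ?_
  · rintro ⟨a, x, b, y⟩ hp
    simp only [mem_filter, mem_Q] at hp
    obtain ⟨⟨he, ha, hx, hb, hy⟩, hxy⟩ := hp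
    subst hxy
    simp only [Finset.mem_sigma, Nat.mem_divisors, mem_Ico]
    have hd : (a + b) * x = n := by rw [Nat.add_mul]; exact he
    have hax : 0 < a * x := Nat.mul_pos ha hx
    exact ⟨⟨⟨x, hd.symm⟩, by omega⟩, by omega, by omega⟩
  · rintro ⟨d, a⟩ hq
    simp only [Finset.mem_sigma, Nat.mem_divisors, mem_Ico] at hq
    obtain ⟨⟨hdvd, hn0⟩, ha1, had⟩ := hq
    have hd0 : 0 < d := by omega
    have hnd : 0 < n / d := Nat.div_pos (Nat.le_of_dvd (Nat.pos_of_ne_zero hn0) hdvd) hd0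
    simp only [mem_filter, mem_Q]
    have hsum : a * (n / d) + (d - a) * (n / d) = n := by
      have h1 : a + (d - a) = d := by omega
      calc a * (n / d) + (d - a) * (n / d) = (a + (d - a)) * (n / d) := by ring
        _ = d * (n / d) := by rw [h1]
        _ = n := Nat.mul_div_cancel' hdvd
    exact ⟨⟨hsum, by omega, hnd, by omega, hnd⟩, trivial⟩
  · rintro ⟨a, x, b, y⟩ hp
    simp only [mem_filter, mem_Q] at hp
    obtain ⟨⟨he, ha, hx, hb, hy⟩, hxy⟩ := hp
    subst hxy
    have hd : (a + b) * x = n := by rw [Nat.add_mul]; exact he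
    have hx' : n / (a + b) = x := by
      rw [← hd]; exact Nat.mul_div_cancel_left x (by omega)
    simp only [Prod.mk.injEq, and_true, true_and]
    omega
  · rintro ⟨d, a⟩ hq
    simp only [Finset.mem_sigma, Nat.mem_divisors, mem_Ico] at hq
    obtain ⟨⟨hdvd, hn0⟩, ha1, had⟩ := hq
    have h : a + (d - a) = d := by omega
    simp [h]
  · rintro ⟨a, x, b, y⟩ hp
    simp only [Nat.add_sub_cancel_left]

lemma Qdiag_ab (n : ℕ) (F : ℕ → ℚ) :
    ∑ p ∈ (Q n).filter (fun p => p.1 = p.2.2.1), F p.1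
      = ∑ d ∈ n.divisors, ((n / d - 1 : ℕ) : ℚ) * F d := by
  have : ∀ d ∈ n.divisors, ((n / d - 1 : ℕ) : ℚ) * F d
      = ∑ _x ∈ Ico 1 (n / d), F d := by
    intro d hd
    rw [Finset.sum_const, Nat.card_Ico, nsmul_eq_mul]
  rw [Finset.sum_congr rfl this,
    ← Finset.sum_sigma (n.divisors) (fun d => Ico 1 (n / d)) (fun q => F q.1)]
  refine Finset.sum_nbij' (fun p => ⟨p.1, p.2.1⟩)
    (fun q => (q.1, q.2, q.1, n / q.1 - q.2)) ?_ ?_ ?_ ?_ ?_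
  · rintro ⟨a, x, b, y⟩ hp
    simp only [mem_filter, mem_Q] at hp
    obtain ⟨⟨he, ha, hx, hb, hy⟩, hab⟩ := hp
    subst hab
    have hd : a * (x + y) = n := by rw [Nat.mul_add]; exact he
    have hx' : n / a = x + y := by
      rw [← hd]; exact Nat.mul_div_cancel_left _ (by omega)
    simp only [Finset.mem_sigma, Nat.mem_divisors, mem_Ico]
    have h0 : 0 < a * x := Nat.mul_pos ha hx
    exact ⟨⟨⟨x + y, hd.symm⟩, by omega⟩, by omega, by omega⟩
  · rintro ⟨d, x⟩ hq
    simp only [Finset.mem_sigma, Nat.mem_divisors, mem_Ico] at hq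
    obtain ⟨⟨hdvd, hn0⟩, hx1, hxd⟩ := hq
    have hd0 : 0 < d := by
      rcases Nat.eq_zero_or_pos d with h | h
      · subst h; simp at hxd
      · exact h
    simp only [mem_filter, mem_Q]
    have hsum : d * x + d * (n / d - x) = n := by
      have h1 : x + (n / d - x) = n / d := by omega
      calc d * x + d * (n / d - x) = d * (x + (n / d - x)) := by ring
        _ = d * (n / d) := by rw [h1]
        _ = n := Nat.mul_div_cancel' hdvd
    exact ⟨⟨hsum, hd0, by omega, hd0, by omega⟩, trivial⟩
  · rintro ⟨a, x, b, y⟩ hp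
    simp only [mem_filter, mem_Q] at hp
    obtain ⟨⟨he, ha, hx, hb, hy⟩, hab⟩ := hp
    subst hab
    have hd : a * (x + y) = n := by rw [Nat.mul_add]; exact he
    have hx' : n / a = x + y := by
      rw [← hd]; exact Nat.mul_div_cancel_left _ (by omega)
    simp only [Prod.mk.injEq, and_true, true_and]
    omega
  · rintro ⟨d, x⟩ hq; rfl
  · rintro ⟨a, x, b, y⟩ hp; rfl
lemma part3 {α : Type*} (s : Finset α) (u v : α → ℕ) (f : α → ℚ) :
    ∑ p ∈ s, f p = ∑ p ∈ s.filter (fun p => u p < v p), f p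
      + ∑ p ∈ s.filter (fun p => v p < u p), f p
      + ∑ p ∈ s.filter (fun p => u p = v p), f p := by
  have h1 := Finset.sum_filter_add_sum_filter_not s (fun p => u p < v p) f
  have h2 := Finset.sum_filter_add_sum_filter_not
    (s.filter fun p => ¬ u p < v p) (fun p => v p < u p) f
  rw [Finset.filter_filter, Finset.filter_filter] at h2
  have e1 : s.filter (fun a => ¬ u a < v a ∧ v a < u a) = s.filter (fun a => v a < u a) :=
    Finset.filter_congr (fun x _ => by constructor <;> intro h <;> [exact h.2; exact ⟨by omega, h⟩])
  have e2 : s.filter (fun a => ¬ u a < v a ∧ ¬ v a < u a) = s.filter (fun a => u a = v a) :=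
    Finset.filter_congr (fun x _ => by omega)
  rw [e1, e2] at h2
  linarith

lemma sum_id_q (d : ℕ) : ∑ a ∈ range d, (a : ℚ) = d * (d - 1) / 2 := by
  induction d with
  | zero => simp
  | succ m ih => rw [Finset.sum_range_succ, ih]; push_cast; ring

lemma sum_sq_q (d : ℕ) : ∑ a ∈ range d, (a : ℚ)^2 = d * (d - 1) * (2 * d - 1) / 6 := by
  induction d with
  | zero => simp
  | succ m ih => rw [Finset.sum_range_succ, ih]; push_cast; ring

lemma inner_xy (d : ℕ) (hd : 0 < d) :
    ∑ a ∈ Ico 1 d, ((a : ℚ)^2 + a * ((d - a : ℕ) : ℚ) + ((d - a : ℕ) : ℚ)^2)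
      = (5 * d^3 - 6 * d^2 + d) / 6 := by
  have step : ∀ a ∈ Ico 1 d, ((a : ℚ)^2 + a * ((d - a : ℕ) : ℚ) + ((d - a : ℕ) : ℚ)^2)
      = (a : ℚ)^2 - a * d + d^2 := by
    intro a ha
    rw [mem_Ico] at ha
    rw [Nat.cast_sub (by omega)]
    ring
  rw [Finset.sum_congr rfl step]
  have hsplit : ∑ a ∈ range d, ((a : ℚ)^2 - a * d + d^2)
      = (0:ℚ)^2 - 0 * d + d^2 + ∑ a ∈ Ico 1 d, ((a : ℚ)^2 - a * d + d^2) := by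
    rw [Finset.range_eq_Ico]
    exact Finset.sum_eq_sum_Ico_succ_bot hd _
  have htot : ∑ a ∈ range d, ((a : ℚ)^2 - a * d + d^2)
      = d * (d - 1) * (2 * d - 1) / 6 - (d * (d - 1) / 2) * d + d * d^2 := by
    rw [Finset.sum_add_distrib, Finset.sum_sub_distrib, sum_sq_q, ← Finset.sum_mul, sum_id_q,
      Finset.sum_const, card_range, nsmul_eq_mul]
  rw [htot] at hsplit
  have := hsplit
  push_cast at this ⊢
  linarith [this]
lemma conv_eq (n : ℕ) :
    ∑ ij ∈ antidiagonal n,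
        (∑ u ∈ Nat.divisorsAntidiagonal ij.1, (u.1 : ℚ)) *
        (∑ v ∈ Nat.divisorsAntidiagonal ij.2, (v.1 : ℚ))
      = ∑ p ∈ Q n, ((p.1 : ℚ) * p.2.2.1) := by
  have hrw : ∀ ij ∈ antidiagonal n,
      (∑ u ∈ Nat.divisorsAntidiagonal ij.1, (u.1 : ℚ)) *
        (∑ v ∈ Nat.divisorsAntidiagonal ij.2, (v.1 : ℚ))
      = ∑ uv ∈ Nat.divisorsAntidiagonal ij.1 ×ˢ Nat.divisorsAntidiagonal ij.2,
          ((uv.1.1 : ℚ) * uv.2.1) := by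
    intro ij _
    rw [Finset.sum_mul_sum, Finset.sum_product]
  rw [Finset.sum_congr rfl hrw, ← Finset.sum_sigma (antidiagonal n)
    (fun ij => Nat.divisorsAntidiagonal ij.1 ×ˢ Nat.divisorsAntidiagonal ij.2)
    (fun q => ((q.2.1.1 : ℚ) * q.2.2.1))]
  refine Finset.sum_nbij' (fun q => (q.2.1.1, q.2.1.2, q.2.2.1, q.2.2.2))
    (fun p => ⟨(p.1 * p.2.1, p.2.2.1 * p.2.2.2), ((p.1, p.2.1), (p.2.2.1, p.2.2.2))⟩)
    ?_ ?_ ?_ ?_ ?_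
  · rintro ⟨⟨i, j⟩, ⟨a, x⟩, ⟨b, y⟩⟩ hq
    simp only [Finset.mem_sigma, Finset.mem_product, Nat.mem_divisorsAntidiagonal,
      Finset.HasAntidiagonal.mem_antidiagonal] at hq
    obtain ⟨hij, ⟨hax, hi0⟩, ⟨hby, hj0⟩⟩ := hq
    simp only [mem_Q]
    have h1 : a ≠ 0 ∧ x ≠ 0 := Nat.mul_ne_zero_iff.mp (by omega)
    have h2 : b ≠ 0 ∧ y ≠ 0 := Nat.mul_ne_zero_iff.mp (by omega)
    exact ⟨by omega, by omega, by omega, by omega, by omega⟩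
  · rintro ⟨a, x, b, y⟩ hp
    simp only [mem_Q] at hp
    obtain ⟨he, ha, hx, hb, hy⟩ := hp
    simp only [Finset.mem_sigma, Finset.mem_product, Nat.mem_divisorsAntidiagonal,
      Finset.HasAntidiagonal.mem_antidiagonal]
    have h1 : 0 < a * x := Nat.mul_pos ha hx
    have h2 : 0 < b * y := Nat.mul_pos hb hy
    exact ⟨he, ⟨trivial, by omega⟩, ⟨trivial, by omega⟩⟩
  · rintro ⟨⟨i, j⟩, ⟨a, x⟩, ⟨b, y⟩⟩ hq
    simp only [Finset.mem_sigma, Finset.mem_product, Nat.mem_divisorsAntidiagonal,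
      Finset.HasAntidiagonal.mem_antidiagonal] at hq
    obtain ⟨hij, ⟨hax, hi0⟩, ⟨hby, hj0⟩⟩ := hq
    subst hax; subst hby; rfl
  · rintro ⟨a, x, b, y⟩ _; rfl
  · rintro ⟨⟨i, j⟩, ⟨a, x⟩, ⟨b, y⟩⟩ _; rfl

lemma besge (n : ℕ) (hn : 0 < n) :
    ∑ p ∈ Q n, ((p.1 : ℚ) * p.2.2.1)
      = ∑ d ∈ n.divisors, (5 * (d : ℚ)^3 + d - 6 * n * d) / 12 := by
  set H : ℕ → ℕ → ℚ := fun a b => (a : ℚ)^2 + a * b + b^2 with hH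
  -- partition of E = ∑ H(a,b) by comparing x and y
  have eE : ∑ p ∈ Q n, H p.1 p.2.2.1
      = ∑ p ∈ (Q n).filter (fun p => p.2.1 < p.2.2.2), H p.1 p.2.2.1
      + ∑ p ∈ (Q n).filter (fun p => p.2.2.2 < p.2.1), H p.1 p.2.2.1
      + ∑ p ∈ (Q n).filter (fun p => p.2.1 = p.2.2.2), H p.1 p.2.2.1 :=
    part3 (Q n) (fun p => p.2.1) (fun p => p.2.2.2) _
  -- partition of E by comparing a and b
  have eE' : ∑ p ∈ Q n, H p.1 p.2.2.1
      = ∑ p ∈ (Q n).filter (fun p => p.1 < p.2.2.1), H p.1 p.2.2.1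
      + ∑ p ∈ (Q n).filter (fun p => p.2.2.1 < p.1), H p.1 p.2.2.1
      + ∑ p ∈ (Q n).filter (fun p => p.1 = p.2.2.1), H p.1 p.2.2.1 :=
    part3 (Q n) (fun p => p.1) (fun p => p.2.2.1) _
  -- partition of S = ∑ a*b by comparing a and b
  have eS : ∑ p ∈ Q n, ((p.1 : ℚ) * p.2.2.1)
      = ∑ p ∈ (Q n).filter (fun p => p.1 < p.2.2.1), ((p.1 : ℚ) * p.2.2.1)
      + ∑ p ∈ (Q n).filter (fun p => p.2.2.1 < p.1), ((p.1 : ℚ) * p.2.2.1)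
      + ∑ p ∈ (Q n).filter (fun p => p.1 = p.2.2.1), ((p.1 : ℚ) * p.2.2.1) :=
    part3 (Q n) (fun p => p.1) (fun p => p.2.2.1) _
  -- swap symmetries
  have sw1 : ∑ p ∈ (Q n).filter (fun p => p.2.1 < p.2.2.2), H p.1 p.2.2.1
      = ∑ p ∈ (Q n).filter (fun p => p.2.2.2 < p.2.1), H p.1 p.2.2.1 := by
    have := Qswap n (fun a x b y => H a b)
      (fun p => p.2.1 < p.2.2.2) (fun p => p.2.2.2 < p.2.1) (fun a x b y => Iff.rfl)
    rw [this]
    exact Finset.sum_congr rfl (fun p _ => by simp only [hH]; ring)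
  have sw2 : ∑ p ∈ (Q n).filter (fun p => p.1 < p.2.2.1), H p.1 p.2.2.1
      = ∑ p ∈ (Q n).filter (fun p => p.2.2.1 < p.1), H p.1 p.2.2.1 := by
    have := Qswap n (fun a x b y => H a b)
      (fun p => p.1 < p.2.2.1) (fun p => p.2.2.1 < p.1) (fun a x b y => Iff.rfl)
    rw [this]
    exact Finset.sum_congr rfl (fun p _ => by simp only [hH]; ring)
  have sw3 : ∑ p ∈ (Q n).filter (fun p => p.1 < p.2.2.1), ((p.1 : ℚ) * p.2.2.1)
      = ∑ p ∈ (Q n).filter (fun p => p.2.2.1 < p.1), ((p.1 : ℚ) * p.2.2.1) := by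
    have := Qswap n (fun a x b y => ((a : ℚ) * b))
      (fun p => p.1 < p.2.2.1) (fun p => p.2.2.1 < p.1) (fun a x b y => Iff.rfl)
    rw [this]
    exact Finset.sum_congr rfl (fun p _ => by ring)
  -- the key bijection plus pointwise identity
  have k1 : ∑ p ∈ (Q n).filter (fun p => p.2.2.2 < p.2.1), H p.1 p.2.2.1
      = ∑ p ∈ (Q n).filter (fun p => p.2.2.1 < p.1),
          (H p.1 p.2.2.1 - 2 * ((p.1 : ℚ) * p.2.2.1)) := by
    rw [Qkey n H]
    refine Finset.sum_congr rfl (fun p hp => ?_)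
    have hba : p.2.2.1 < p.1 := (Finset.mem_filter.mp hp).2
    simp only [hH]
    rw [Nat.cast_sub hba.le]
    ring
  -- diagonal x = y
  have c1 : ∑ p ∈ (Q n).filter (fun p => p.2.1 = p.2.2.2), H p.1 p.2.2.1
      = ∑ d ∈ n.divisors, (5 * (d : ℚ)^3 - 6 * d^2 + d) / 6 := by
    rw [Qdiag_xy n H]
    refine Finset.sum_congr rfl (fun d hd => ?_)
    exact inner_xy d (Nat.pos_of_mem_divisors hd)
  -- diagonal a = b for H
  have c2 : ∑ p ∈ (Q n).filter (fun p => p.1 = p.2.2.1), H p.1 p.2.2.1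
      = ∑ d ∈ n.divisors, ((n / d - 1 : ℕ) : ℚ) * (H d d) := by
    rw [← Qdiag_ab n (fun d => H d d)]
    refine Finset.sum_congr rfl (fun p hp => ?_)
    have hab : p.1 = p.2.2.1 := (Finset.mem_filter.mp hp).2
    rw [← hab]
  -- diagonal a = b for a*b
  have c3 : ∑ p ∈ (Q n).filter (fun p => p.1 = p.2.2.1), ((p.1 : ℚ) * p.2.2.1)
      = ∑ d ∈ n.divisors, ((n / d - 1 : ℕ) : ℚ) * ((d : ℚ) * d) := by
    rw [← Qdiag_ab n (fun d => ((d : ℚ) * d))]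
    refine Finset.sum_congr rfl (fun p hp => ?_)
    have hab : p.1 = p.2.2.1 := (Finset.mem_filter.mp hp).2
    rw [← hab]
  -- split the subtracted sum in k1
  have k2 : ∑ p ∈ (Q n).filter (fun p => p.2.2.1 < p.1),
        (H p.1 p.2.2.1 - 2 * ((p.1 : ℚ) * p.2.2.1))
      = ∑ p ∈ (Q n).filter (fun p => p.2.2.1 < p.1), H p.1 p.2.2.1
      - 2 * ∑ p ∈ (Q n).filter (fun p => p.2.2.1 < p.1), ((p.1 : ℚ) * p.2.2.1) := by
    rw [Finset.sum_sub_distrib, Finset.mul_sum]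
  -- conclude 4·SB = C1 − C2
  have h4 : 4 * ∑ p ∈ (Q n).filter (fun p => p.2.2.1 < p.1), ((p.1 : ℚ) * p.2.2.1)
      = ∑ d ∈ n.divisors, (5 * (d : ℚ)^3 - 6 * d^2 + d) / 6
      - ∑ d ∈ n.divisors, ((n / d - 1 : ℕ) : ℚ) * (H d d) := by
    rw [← c1, ← c2]
    linarith [eE, eE', sw1, sw2, k1, k2]
  have hfin : ∑ p ∈ Q n, ((p.1 : ℚ) * p.2.2.1)
      = ∑ d ∈ n.divisors, ((5 * (d : ℚ)^3 - 6 * d^2 + d) / 6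
          - ((n / d - 1 : ℕ) : ℚ) * (H d d)) / 2
      + ∑ d ∈ n.divisors, ((n / d - 1 : ℕ) : ℚ) * ((d : ℚ) * d) := by
    rw [← Finset.sum_div, Finset.sum_sub_distrib]
    linarith [eS, sw3, c3, h4]
  rw [hfin, ← Finset.sum_add_distrib]
  refine Finset.sum_congr rfl (fun d hd => ?_)
  obtain ⟨hdvd, hn0⟩ := Nat.mem_divisors.mp hd
  have hd0 : 0 < d := Nat.pos_of_mem_divisors hd
  have h1 : 1 ≤ n / d := (Nat.one_le_div_iff hd0).mpr (Nat.le_of_dvd hn hdvd)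
  have h2 : ((n / d : ℕ) : ℚ) * d = n := by
    exact_mod_cast congrArg (Nat.cast (R := ℚ)) (Nat.div_mul_cancel hdvd)
  rw [Nat.cast_sub h1]
  simp only [hH]
  push_cast
  linear_combination (-(d : ℚ) / 2) * h2


noncomputable section

/-- The operator `q·d/dq` on formal power series: sends `Σ aₙ qⁿ` to `Σ n·aₙ qⁿ`. -/
def qd (f : PowerSeries ℚ) : PowerSeries ℚ :=
  PowerSeries.mk fun n => (n : ℚ) * PowerSeries.coeff (R := ℚ) n f

/-- The weight-2 Eisenstein series `G₂(q) = -1/24 + Σ_{n≥1} σ₁(n) qⁿ`. -/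
def G2 : PowerSeries ℚ :=
  PowerSeries.mk fun n => if n = 0 then -(1 / 24) else ∑ d ∈ n.divisors, (d : ℚ)

/-- The weight-4 Eisenstein series `G₄(q) = 1/240 + Σ_{n≥1} σ₃(n) qⁿ`. -/
def G4 : PowerSeries ℚ :=
  PowerSeries.mk fun n => if n = 0 then 1 / 240 else ∑ d ∈ n.divisors, (d : ℚ) ^ 3

lemma coeff_G2 (i : ℕ) : PowerSeries.coeff (R := ℚ) i G2
    = (∑ u ∈ Nat.divisorsAntidiagonal i, (u.1 : ℚ)) + (if i = 0 then (-(1/24) : ℚ) else 0) := by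
  rcases Nat.eq_zero_or_pos i with rfl | hi
  · simp [G2, PowerSeries.coeff_mk]
  · rw [G2, PowerSeries.coeff_mk, if_neg (by omega), if_neg (by omega), add_zero,
      Nat.sum_divisorsAntidiagonal (fun a _ => (a : ℚ))]

lemma coeffG2sq (n : ℕ) (hn : 0 < n) :
    ∑ ij ∈ antidiagonal n, (PowerSeries.coeff (R := ℚ) ij.1 G2) * (PowerSeries.coeff (R := ℚ) ij.2 G2)
      = ∑ p ∈ Q n, ((p.1 : ℚ) * p.2.2.1) - (1/12) * ∑ d ∈ n.divisors, (d : ℚ) := by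
  set t : ℕ → ℚ := fun i => ∑ u ∈ Nat.divisorsAntidiagonal i, (u.1 : ℚ) with ht
  set e : ℕ → ℚ := fun i => if i = 0 then (-(1/24) : ℚ) else 0 with he
  have step1 : ∑ ij ∈ antidiagonal n, (PowerSeries.coeff (R := ℚ) ij.1 G2) * (PowerSeries.coeff (R := ℚ) ij.2 G2)
      = ∑ ij ∈ antidiagonal n, (t ij.1 * t ij.2 + (e ij.1 * t ij.2 + t ij.1 * e ij.2 + e ij.1 * e ij.2)) := by
    refine Finset.sum_congr rfl (fun ij _ => ?_)
    rw [coeff_G2 ij.1, coeff_G2 ij.2]; ring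
  rw [step1, Finset.sum_add_distrib, Finset.sum_add_distrib, Finset.sum_add_distrib]
  have hA : ∑ ij ∈ antidiagonal n, e ij.1 * t ij.2 = -(1/24) * t n := by
    rw [Finset.Nat.sum_antidiagonal_eq_sum_range_succ_mk]
    rw [Finset.sum_eq_single_of_mem 0 (by simp)]
    · simp [he]
    · intro k _ hk
      simp [he, hk]
  have hB : ∑ ij ∈ antidiagonal n, t ij.1 * e ij.2 = t n * -(1/24) := by
    rw [Finset.Nat.sum_antidiagonal_eq_sum_range_succ_mk]
    rw [Finset.sum_eq_single_of_mem n (Finset.self_mem_range_succ n)]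
    · simp [he]
    · intro k hk hkn
      rw [Finset.mem_range] at hk
      have : n - k ≠ 0 := by omega
      simp [he, this]
  have hC : ∑ ij ∈ antidiagonal n, e ij.1 * e ij.2 = 0 := by
    rw [Finset.Nat.sum_antidiagonal_eq_sum_range_succ_mk]
    refine Finset.sum_eq_zero (fun k _ => ?_)
    rcases Nat.eq_zero_or_pos k with rfl | hk
    · have hn' : ¬ n = 0 := by omega
      simp [he, hn']
    · have hk' : ¬ k = 0 := by omega
      simp [he, hk']
  have hD : ∑ ij ∈ antidiagonal n, t ij.1 * t ij.2 = ∑ p ∈ Q n, ((p.1 : ℚ) * p.2.2.1) :=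
    conv_eq n
  have hT : t n = ∑ d ∈ n.divisors, (d : ℚ) :=
    Nat.sum_divisorsAntidiagonal (fun a _ => (a : ℚ))
  rw [hA, hB, hC, hD, hT]
  ring

/-- Ramanujan's differential equation: `q·d/dq G₂ = -2·G₂² + (5/6)·G₄` as formal power series. -/
theorem ramanujan_G2 : qd G2 = -2 * G2 ^ 2 + PowerSeries.C (R := ℚ) (5 / 6) * G4 := by
  have h2 : (-2 : PowerSeries ℚ) * G2 ^ 2 = PowerSeries.C (R := ℚ) (-2) * G2 ^ 2 := by
    congr 1
    simp only [map_neg, map_ofNat]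
  ext n
  rw [map_add, h2, PowerSeries.coeff_C_mul, PowerSeries.coeff_C_mul, qd, PowerSeries.coeff_mk,
    sq, PowerSeries.coeff_mul]
  rcases Nat.eq_zero_or_pos n with rfl | hn
  · simp [G2, G4, PowerSeries.coeff_mk]
    norm_num
  · rw [coeffG2sq n hn, besge n hn]
    rw [G2, G4, PowerSeries.coeff_mk, PowerSeries.coeff_mk, if_neg (by omega), if_neg (by omega)]
    rw [Finset.mul_sum, Finset.mul_sum, Finset.mul_sum, ← Finset.sum_sub_distrib,
      Finset.mul_sum, ← Finset.sum_add_distrib]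
    exact Finset.sum_congr rfl (fun d _ => by ring)


end
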